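/- Let S be a Hermitian matrix on ℂ^r and h = exp(S), a positive definite Hermitian matrix. Then log((tr h + tr h⁻¹)/(2r)) ≤ |S| ≤ √r · log(tr h + tr h⁻¹), where |S| = (Σᵢ λᵢ²)^{1/2} is the Frobenius norm of S (λᵢ the eigenvalues of S). -/

import Mathlib

open Matrix

lemma tr_exp_herm {r : ℕ} (S : Matrix (Fin r) (Fin r) ℂ) (hS : S.IsHermitian) :
    (NormedSpace.exp S).trace = ∑ i, (Real.exp (hS.eigenvalues i) : ℂ) ∧
    ((NormedSpace.exp S)⁻¹).trace = ∑ i, (Real.exp (-hS.eigenvalues i) : ℂ) := by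
  set U : Matrix (Fin r) (Fin r) ℂ := (hS.eigenvectorUnitary : Matrix (Fin r) (Fin r) ℂ) with hU
  have hstar : star U * U = 1 := (Matrix.mem_unitaryGroup_iff').mp hS.eigenvectorUnitary.2
  have hUunit : IsUnit U := (Matrix.isUnit_iff_isUnit_det U).mpr (Matrix.isUnit_det_of_left_inverse hstar)
  have hdet : IsUnit U.det := Matrix.isUnit_det_of_left_inverse hstar
  have hinv : star U = U⁻¹ := (Matrix.inv_eq_left_inv hstar).symm
  have h1 : S = U * diagonal (RCLike.ofReal ∘ hS.eigenvalues) * U⁻¹ := by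
    rw [← hinv]; exact hS.spectral_theorem
  have key : ∀ v : Fin r → ℝ,
      (U * NormedSpace.exp (diagonal (fun i => (v i : ℂ))) * U⁻¹).trace
        = ∑ i, (Real.exp (v i) : ℂ) := by
    intro v
    rw [Matrix.trace_mul_cycle, Matrix.nonsing_inv_mul _ hdet, one_mul,
      Matrix.exp_diagonal, Matrix.trace_diagonal]
    congr 1; ext i
    rw [Pi.coe_exp, ← Complex.exp_eq_exp_ℂ]
    exact (Complex.ofReal_exp _).symm
  have h2 : NormedSpace.exp S
      = U * NormedSpace.exp (diagonal (fun i => ((hS.eigenvalues i : ℝ) : ℂ))) * U⁻¹ := by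
    conv_lhs => rw [h1]
    rw [Matrix.exp_conj U _ hUunit]
    rfl
  have h3 : (NormedSpace.exp S)⁻¹
      = U * NormedSpace.exp (diagonal (fun i => ((-hS.eigenvalues i : ℝ) : ℂ))) * U⁻¹ := by
    rw [← Matrix.exp_neg]
    have h1' : -S = U * diagonal (fun i => ((-hS.eigenvalues i : ℝ) : ℂ)) * U⁻¹ := by
      conv_lhs => rw [h1]
      rw [← Matrix.neg_mul, ← Matrix.mul_neg, Matrix.diagonal_neg]
      push_cast
      rfl
    rw [h1', Matrix.exp_conj U _ hUunit]
  rw [h3, h2]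
  exact ⟨key _, key _⟩

/-- For a Hermitian matrix `S` on `ℂ^r` with `h = exp S`,
`log((tr h + tr h⁻¹)/(2r)) ≤ |S|_F ≤ √r · log(tr h + tr h⁻¹)`, where the
Frobenius norm of `S` is the ℓ² norm of its eigenvalues. -/
theorem stmt0 {r : ℕ} (hr : 0 < r) (S : Matrix (Fin r) (Fin r) ℂ)
    (hS : S.IsHermitian) :
    Real.log ((((NormedSpace.exp S).trace).re + (((NormedSpace.exp S)⁻¹).trace).re) / (2 * r))
        ≤ Real.sqrt (∑ i, hS.eigenvalues i ^ 2) ∧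
      Real.sqrt (∑ i, hS.eigenvalues i ^ 2)
        ≤ Real.sqrt r *
          Real.log (((NormedSpace.exp S).trace).re + (((NormedSpace.exp S)⁻¹).trace).re) := by
  obtain ⟨h1, h2⟩ := tr_exp_herm S hS
  have hre1 : ((NormedSpace.exp S).trace).re = ∑ i, Real.exp (hS.eigenvalues i) := by
    rw [h1, ← Complex.ofReal_sum, Complex.ofReal_re]
  have hre2 : (((NormedSpace.exp S)⁻¹).trace).re = ∑ i, Real.exp (-hS.eigenvalues i) := by
    rw [h2, ← Complex.ofReal_sum, Complex.ofReal_re]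
  rw [hre1, hre2]
  set l := hS.eigenvalues with hl
  set M := Real.sqrt (∑ i, l i ^ 2) with hM
  set t := (∑ i, Real.exp (l i)) + ∑ i, Real.exp (-l i) with ht
  have htsum : t = ∑ i, (Real.exp (l i) + Real.exp (-l i)) := by
    rw [ht, Finset.sum_add_distrib]
  have hM0 : 0 ≤ M := Real.sqrt_nonneg _
  have habs : ∀ i, |l i| ≤ M := by
    intro i
    rw [← Real.sqrt_sq_eq_abs]
    exact Real.sqrt_le_sqrt (Finset.single_le_sum (fun j _ => sq_nonneg (l j))
      (Finset.mem_univ i))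
  have hexpabs : ∀ i, Real.exp |l i| ≤ Real.exp (l i) + Real.exp (-l i) := by
    intro i
    rcases abs_cases (l i) with ⟨h, _⟩ | ⟨h, _⟩
    · rw [h]; linarith [Real.exp_pos (-l i)]
    · rw [h]; linarith [Real.exp_pos (l i)]
  have hne : (Finset.univ : Finset (Fin r)).Nonempty := by
    have : Nonempty (Fin r) := ⟨⟨0, hr⟩⟩
    exact Finset.univ_nonempty
  have htpos : 0 < t := by
    rw [htsum]
    exact Finset.sum_pos (fun i _ => by positivity) hne
  have htr : (r : ℝ) ≤ t := by
    rw [htsum]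
    calc (r : ℝ) = ∑ _i : Fin r, (1 : ℝ) := by simp
    _ ≤ _ := Finset.sum_le_sum fun i _ => le_trans (Real.one_le_exp (abs_nonneg _)) (hexpabs i)
  have ht1 : 1 ≤ t := le_trans (by exact_mod_cast hr) htr
  constructor
  · -- lower bound
    rw [Real.log_le_iff_le_exp (by positivity)]
    rw [div_le_iff₀ (by positivity)]
    rw [htsum]
    calc ∑ i, (Real.exp (l i) + Real.exp (-l i))
        ≤ ∑ _i : Fin r, 2 * Real.exp M := by
          refine Finset.sum_le_sum fun i _ => ?_
          have h1 := Real.exp_le_exp.mpr (le_trans (le_abs_self (l i)) (habs i))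
          have h2 := Real.exp_le_exp.mpr (le_trans (neg_le_abs (l i)) (habs i))
          linarith
      _ = Real.exp M * (2 * r) := by rw [Finset.sum_const]; simp; ring
  · -- upper bound
    have hL0 : 0 ≤ Real.log t := Real.log_nonneg ht1
    have hiL : ∀ i, |l i| ≤ Real.log t := by
      intro i
      rw [Real.le_log_iff_exp_le htpos]
      refine le_trans (hexpabs i) ?_
      rw [htsum]
      exact Finset.single_le_sum (f := fun j => Real.exp (l j) + Real.exp (-l j)) (fun j _ => by positivity) (Finset.mem_univ i)
    calc M ≤ Real.sqrt (∑ _i : Fin r, Real.log t ^ 2) := by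
          apply Real.sqrt_le_sqrt
          refine Finset.sum_le_sum fun i _ => ?_
          rw [← sq_abs]
          exact pow_le_pow_left₀ (abs_nonneg _) (hiL i) 2
      _ = Real.sqrt r * Real.log t := by
          rw [Finset.sum_const, Finset.card_univ, Fintype.card_fin, nsmul_eq_mul,
            Real.sqrt_mul (by positivity), Real.sqrt_sq hL0]
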